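/- arXiv:2110.13743 — 2 statements merged into one kernel-verified Lean document; each statement's English description precedes it below -/
import Mathlib

section
/- For all compositions u and v and every z ∈ ℂ with |z| < 1, Li_u(z)·Li_v(z) = Σ_w (u ⧢ v)(w)·Li_w(z), the (finite) sum ranging over all compositions w; that is, Li_• is a shuffle character on polynomials: Li_{u⧢v} = Li_u·Li_v on the unit disk. -/
open scoped NNReal ENNReal

/-- A composition: a finite list of positive integers. -/
abbrev Comp := List ℕ+

/-- Harmonic sum `H_s(N) = Σ_{N ≥ n₁ > … > n_r > 0} 1/(n₁^{s₁} ⋯ n_r^{s_r})`,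
with `H_ε(N) = 1`. -/
noncomputable def Hc : Comp → ℕ → ℂ
  | [], _ => 1
  | s :: u, N => ∑ n ∈ Finset.Icc 1 N, ((n : ℂ) ^ (s : ℕ))⁻¹ * Hc u (n - 1)

/-- Polylogarithm `Li_s(z) = Σ_{n₁ > … > n_r > 0} z^{n₁}/(n₁^{s₁} ⋯ n_r^{s_r})`,
with `Li_ε = 1` (the `n = 0` term of the `tsum` vanishes since `s ≥ 1`). -/
noncomputable def LiC : Comp → ℂ → ℂ
  | [], _ => 1
  | s :: u, z => ∑' n : ℕ, z ^ n * ((n : ℂ) ^ (s : ℕ))⁻¹ * Hc u (n - 1)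

/-- Shuffle coefficient on words over the alphabet `X = {x₀, x₁} ≃ Bool`:
`⟨u ⧢ v, w⟩`. -/
def shufW : List Bool → List Bool → List Bool → ℕ
  | [], v, w => if w = v then 1 else 0
  | u, [], w => if w = u then 1 else 0
  | _ :: _, _ :: _, [] => 0
  | a :: u, b :: v, c :: w =>
      (if c = a then shufW u (b :: v) w else 0) +
      (if c = b then shufW (a :: u) v w else 0)
termination_by u v _ => u.length + v.length

/-- The word `π_X(s) = x₀^{s₁−1}x₁ ⋯ x₀^{s_r−1}x₁` (coding `x₀ = false`,
`x₁ = true`). -/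
def piX : Comp → List Bool
  | [] => []
  | s :: u => List.replicate ((s : ℕ) - 1) false ++ true :: piX u

/-- Shuffle coefficient transported to compositions:
`(u ⧢ v)(w) = (π_X(u) ⧢ π_X(v))(π_X(w))`. -/
def shufC (u v w : Comp) : ℕ := shufW (piX u) (piX v) (piX w)



theorem shufW_nil_left (v w) : shufW [] v w = if w = v then 1 else 0 := by simp [shufW]
theorem shufW_nil_right (u w) : shufW u [] w = if w = u then 1 else 0 := by
  cases u <;> simp [shufW]
theorem shufW_cons_cons (a u b v c w) : shufW (a::u) (b::v) (c::w) =
      (if c = a then shufW u (b :: v) w else 0) +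
      (if c = b then shufW (a :: u) v w else 0) := by simp [shufW]

theorem shufW_branch {a u b v c w} (h : shufW (a::u) (b::v) (c::w) ≠ 0) :
    (c = a ∧ shufW u (b::v) w ≠ 0) ∨ (c = b ∧ shufW (a::u) v w ≠ 0) := by
  rw [shufW_cons_cons] at h
  have h' : (if c = a then shufW u (b::v) w else 0) ≠ 0 ∨
      (if c = b then shufW (a::u) v w else 0) ≠ 0 := by omega
  rcases h' with h' | h'
  · left; split at h' <;> simp_all
  · right; split at h' <;> simp_all

theorem shufW_length : ∀ u v w, shufW u v w ≠ 0 → w.length = u.length + v.length := by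
  intro u v w
  induction u, v, w using shufW.induct <;> simp_all [shufW] <;> omega

theorem shufW_count : ∀ u v w, shufW u v w ≠ 0 →
    w.count true = u.count true + v.count true := by
  intro u v w
  induction u, v, w using shufW.induct with
  | case6 a u b v c w ih1 ih2 =>
    intro h
    rcases shufW_branch h with ⟨rfl, h'⟩ | ⟨rfl, h'⟩
    · simp [List.count_cons, ih1 h']; omega
    · simp [List.count_cons, ih2 h']; omega
  | _ => simp_all [shufW, List.count_cons]

theorem shufW_cons_nil_r (u : List Bool) (b v) : shufW u (b::v) [] = 0 := by
  cases u <;> simp [shufW]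
theorem shufW_cons_nil_l (u : List Bool) (b v) : shufW (b::v) u [] = 0 := by
  cases u <;> simp [shufW]

def Wd (w : List Bool) : Prop := w.getLast? ≠ some false

theorem Wd_tail {a : Bool} {u} (h : Wd (a::u)) : Wd u := by
  cases u with
  | nil => simp [Wd]
  | cons b t => simpa [Wd, List.getLast?_cons_cons] using h

theorem Wd_cons {a : Bool} {u} (h : Wd u) (hne : u ≠ []) : Wd (a::u) := by
  cases u with
  | nil => simp at hne
  | cons b t => simpa [Wd, List.getLast?_cons_cons] using h

theorem Wd_false_ne_nil {u} (h : Wd (false::u)) : u ≠ [] := by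
  rintro rfl; simp [Wd] at h

theorem shufW_Wd : ∀ u v w, Wd u → Wd v → shufW u v w ≠ 0 → Wd w := by
  intro u v w
  induction u, v, w using shufW.induct with
  | case1 w => intro _ hv _; exact hv
  | case2 v w => intro _ _ h; simp [shufW] at h; rwa [h]
  | case3 w _ => intro hu _ _; exact hu
  | case4 u w _ _ => intro hu _ h; rw [shufW_nil_right] at h; simp at h; rwa [h]
  | case5 a u b v => intro _ _ h; rw [shufW_cons_nil_r] at h; simp at h
  | case6 a u b v c w ih1 ih2 =>
    intro hu hv h
    have hwne : w ≠ [] := by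
      rintro rfl
      rcases shufW_branch h with ⟨_, h'⟩ | ⟨_, h'⟩
      · exact h' (shufW_cons_nil_r u b v)
      · exact h' (shufW_cons_nil_l v a u)
    rcases shufW_branch h with ⟨rfl, h'⟩ | ⟨rfl, h'⟩
    · exact Wd_cons (ih1 (Wd_tail hu) hv h') hwne
    · exact Wd_cons (ih2 hu (Wd_tail hv) h') hwne

def toComp : List Bool → Comp
  | [] => []
  | true :: w => 1 :: toComp w
  | false :: w => match toComp w with
      | [] => [1]
      | s :: u => (s+1) :: u

theorem toComp_ne_nil {w : List Bool} (h : w ≠ []) : toComp w ≠ [] := by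
  match w with
  | true :: w => simp [toComp]
  | false :: w =>
    simp only [toComp]
    split <;> simp

theorem toComp_replicate (k : ℕ) (w : List Bool) :
    toComp (List.replicate k false ++ true :: w) =
      (⟨k+1, Nat.succ_pos k⟩ : ℕ+) :: toComp w := by
  induction k with
  | zero => simp [toComp]; rfl
  | succ k ih =>
    have : List.replicate (k+1) false ++ true :: w
        = false :: (List.replicate k false ++ true :: w) := by simp [List.replicate_succ]
    have e3 : toComp (false :: (List.replicate k false ++ true :: w))
        = ((⟨k+1, Nat.succ_pos k⟩:ℕ+)+1) :: toComp w := by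
      show (match toComp (List.replicate k false ++ true :: w) with
        | [] => [1] | s :: u => (s+1)::u) = _
      rw [ih]
      rfl
    rw [this, e3]
    congr 1

theorem toComp_piX (u : Comp) : toComp (piX u) = u := by
  induction u with
  | nil => rfl
  | cons s u ih =>
    show toComp (List.replicate ((s:ℕ)-1) false ++ true :: piX u) = s :: u
    rw [toComp_replicate, ih]
    congr 1
    apply PNat.coe_injective
    show (s:ℕ) - 1 + 1 = (s:ℕ)
    have h2 : 0 < (s:ℕ) := s.pos
    omega

theorem piX_inj : Function.Injective piX := by
  intro a b h
  rw [← toComp_piX a, ← toComp_piX b, h]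

theorem piX_cons (s : ℕ+) (u : Comp) :
    piX (s::u) = List.replicate ((s:ℕ)-1) false ++ true :: piX u := rfl

theorem piX_toComp {w : List Bool} (h : Wd w) : piX (toComp w) = w := by
  induction w with
  | nil => rfl
  | cons a w ih =>
    cases a with
    | true =>
      show piX (1 :: toComp w) = true :: w
      rw [piX_cons, ih (Wd_tail h)]
      simp
    | false =>
      have hw : w ≠ [] := Wd_false_ne_nil h
      have ihw := ih (Wd_tail h)
      obtain ⟨s, u, hsu⟩ : ∃ s u, toComp w = s :: u := by
        rcases h' : toComp w with _ | ⟨s, u⟩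
        · exact absurd h' (toComp_ne_nil hw)
        · exact ⟨s, u, rfl⟩
      have hstep : toComp (false :: w) = (s+1) :: u := by
        show (match toComp w with
          | [] => [1]
          | s :: u => (s+1) :: u) = (s+1) :: u
        rw [hsu]
      rw [hstep]
      rw [hsu, piX_cons] at ihw
      rw [piX_cons, ← ihw]
      have h1 : ((s+1:ℕ+):ℕ) - 1 = ((s:ℕ) - 1) + 1 := by
        have h2 : 0 < (s:ℕ) := s.pos
        rw [PNat.add_coe]
        simp only [PNat.one_coe]
        omega
      rw [h1, List.replicate_succ]
      simp

/-! ## Analysis -/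

noncomputable def coef : Comp → ℕ → ℂ
  | [], n => if n = 0 then 1 else 0
  | s :: u, n => ((n : ℂ) ^ (s : ℕ))⁻¹ * Hc u (n - 1)

theorem coef_nil (n : ℕ) : coef [] n = if n = 0 then 1 else 0 := rfl
theorem coef_cons (s : ℕ+) (u : Comp) (n : ℕ) :
    coef (s :: u) n = ((n : ℂ) ^ (s : ℕ))⁻¹ * Hc u (n - 1) := rfl
theorem Hc_nil (N : ℕ) : Hc [] N = 1 := rfl
theorem Hc_cons (s : ℕ+) (u : Comp) (N : ℕ) :
    Hc (s :: u) N = ∑ n ∈ Finset.Icc 1 N, ((n : ℂ) ^ (s : ℕ))⁻¹ * Hc u (n - 1) := rfl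
theorem LiC_nil (z : ℂ) : LiC [] z = 1 := rfl
theorem LiC_cons (s : ℕ+) (u : Comp) (z : ℂ) :
    LiC (s :: u) z = ∑' n : ℕ, z ^ n * ((n : ℂ) ^ (s : ℕ))⁻¹ * Hc u (n - 1) := rfl

theorem norm_inv_pow_le (n s : ℕ) : ‖((n : ℂ) ^ s)⁻¹‖ ≤ 1 := by
  rcases Nat.eq_zero_or_pos n with rfl | hn
  · rcases Nat.eq_zero_or_pos s with rfl | hs
    · simp
    · simp [zero_pow hs.ne']
  · rw [norm_inv, norm_pow]
    have h1 : (1:ℝ) ≤ ‖(n:ℂ)‖ := by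
      rw [Complex.norm_natCast]; exact_mod_cast hn
    have : (1:ℝ) ≤ ‖(n:ℂ)‖ ^ s := one_le_pow₀ h1
    rw [inv_le_one_iff₀]; right; exact this

theorem Hc_norm_le : ∀ (u : Comp) (N : ℕ), ‖Hc u N‖ ≤ (N : ℝ) ^ u.length := by
  intro u
  induction u with
  | nil => intro N; simp [Hc]
  | cons s u ih =>
    intro N
    show ‖∑ n ∈ Finset.Icc 1 N, ((n : ℂ) ^ (s:ℕ))⁻¹ * Hc u (n - 1)‖ ≤ _
    calc ‖∑ n ∈ Finset.Icc 1 N, ((n : ℂ) ^ (s:ℕ))⁻¹ * Hc u (n - 1)‖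
        ≤ ∑ n ∈ Finset.Icc 1 N, ‖((n : ℂ) ^ (s:ℕ))⁻¹ * Hc u (n - 1)‖ :=
          norm_sum_le _ _
      _ ≤ ∑ n ∈ Finset.Icc 1 N, (N : ℝ) ^ u.length := by
          apply Finset.sum_le_sum
          intro n hn
          rw [norm_mul]
          have h1 := norm_inv_pow_le n (s:ℕ)
          have h2 : ‖Hc u (n-1)‖ ≤ ((n-1 : ℕ) : ℝ) ^ u.length := ih (n-1)
          have h3 : ((n-1 : ℕ) : ℝ) ^ u.length ≤ (N : ℝ) ^ u.length := by
            apply pow_le_pow_left₀ (by positivity)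
            have hn' := Finset.mem_Icc.mp hn
            exact_mod_cast Nat.le_trans (Nat.sub_le n 1) hn'.2
          calc ‖((n : ℂ) ^ (s:ℕ))⁻¹‖ * ‖Hc u (n-1)‖
              ≤ 1 * ((N : ℝ) ^ u.length) := by
                apply mul_le_mul h1 (h2.trans h3) (norm_nonneg _) zero_le_one
            _ = (N : ℝ) ^ u.length := one_mul _
      _ = (N : ℝ) * (N : ℝ) ^ u.length := by
          rw [Finset.sum_const, Nat.card_Icc]
          simp [nsmul_eq_mul]
      _ = (N : ℝ) ^ (List.length (s :: u)) := by rw [List.length_cons, pow_succ]; ring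

theorem coef_norm_le (u : Comp) (n : ℕ) : ‖coef u n‖ ≤ ((n : ℝ) + 1) ^ u.length := by
  cases u with
  | nil =>
    simp only [coef, List.length_nil, pow_zero]
    split <;> simp
  | cons s u =>
    show ‖((n : ℂ) ^ (s:ℕ))⁻¹ * Hc u (n - 1)‖ ≤ _
    rw [norm_mul]
    have h1 := norm_inv_pow_le n (s:ℕ)
    have h2 : ‖Hc u (n-1)‖ ≤ ((n-1:ℕ) : ℝ) ^ u.length := Hc_norm_le u (n-1)
    have h3 : ((n-1:ℕ) : ℝ) ^ u.length ≤ ((n:ℝ)+1) ^ u.length := by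
      apply pow_le_pow_left₀ (by positivity)
      have : ((n-1:ℕ):ℝ) ≤ (n:ℝ) := by exact_mod_cast Nat.sub_le n 1
      linarith
    have h4 : ((n:ℝ)+1) ^ u.length ≤ ((n:ℝ)+1) ^ (u.length + 1) := by
      apply pow_le_pow_right₀ (by linarith [Nat.cast_nonneg (α := ℝ) n])
      omega
    calc ‖((n : ℂ) ^ (s:ℕ))⁻¹‖ * ‖Hc u (n-1)‖ ≤ 1 * (((n:ℝ)+1) ^ u.length) :=
          mul_le_mul h1 (h2.trans h3) (norm_nonneg _) zero_le_one
      _ = ((n:ℝ)+1) ^ u.length := one_mul _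
      _ ≤ ((n:ℝ)+1) ^ (List.length (s :: u)) := by rw [List.length_cons]; exact h4

theorem summable_aux (k : ℕ) {r : ℝ} (h0 : 0 ≤ r) (h1 : r < 1) :
    Summable (fun n : ℕ => ((n : ℝ) + 1) ^ k * r ^ n) := by
  have H : Summable (fun n : ℕ => (n : ℝ) ^ k * r ^ n) :=
    summable_pow_mul_geometric_of_norm_lt_one k
      (by rwa [Real.norm_eq_abs, abs_of_nonneg h0])
  rcases eq_or_lt_of_le h0 with rfl | hr
  · apply summable_of_ne_finset_zero (s := {0})
    intro n hn
    simp only [Finset.mem_singleton] at hn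
    rw [zero_pow hn, mul_zero]
  · have H1 : Summable (fun n : ℕ => ((n+1 : ℕ) : ℝ) ^ k * r ^ (n+1)) :=
      (summable_nat_add_iff 1).mpr H
    have H2 := H1.mul_left r⁻¹
    apply H2.congr
    intro n
    push_cast
    rw [pow_succ]
    field_simp

theorem summable_of_bound {a : ℕ → ℂ} {C : ℝ} {k : ℕ}
    (ha : ∀ n, ‖a n‖ ≤ C * ((n : ℝ) + 1) ^ k) {z : ℂ} (hz : ‖z‖ < 1) :
    Summable (fun n => a n * z ^ n) := by
  have hS : Summable (fun n : ℕ => C * (((n:ℝ)+1)^k * ‖z‖^n)) :=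
    (summable_aux k (norm_nonneg z) hz).mul_left C
  apply Summable.of_norm
  apply Summable.of_nonneg_of_le (fun n => norm_nonneg _) (fun n => ?_) hS
  rw [norm_mul, norm_pow]
  calc ‖a n‖ * ‖z‖ ^ n ≤ (C * ((n:ℝ)+1)^k) * ‖z‖ ^ n :=
        mul_le_mul_of_nonneg_right (ha n) (pow_nonneg (norm_nonneg z) n)
    _ = C * (((n:ℝ)+1)^k * ‖z‖ ^ n) := by ring

theorem LiC_eq_tsum (u : Comp) (z : ℂ) : LiC u z = ∑' n : ℕ, coef u n * z ^ n := by
  cases u with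
  | nil =>
    show (1 : ℂ) = _
    rw [tsum_eq_single 0 (fun n hn => by simp [coef, hn])]
    simp [coef]
  | cons s u =>
    show (∑' n : ℕ, z ^ n * ((n : ℂ) ^ (s:ℕ))⁻¹ * Hc u (n - 1)) = _
    apply tsum_congr
    intro n
    show z ^ n * ((n : ℂ) ^ (s:ℕ))⁻¹ * Hc u (n - 1)
      = ((n : ℂ) ^ (s:ℕ))⁻¹ * Hc u (n - 1) * z ^ n
    ring

noncomputable def dLi (u : Comp) (z : ℂ) : ℂ :=
  ∑' n : ℕ, ((n : ℂ) + 1) * coef u (n + 1) * z ^ n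

theorem dcoef_norm_le (u : Comp) (n : ℕ) :
    ‖((n : ℂ) + 1) * coef u (n + 1)‖ ≤ (2:ℝ) ^ u.length * ((n : ℝ) + 1) ^ (u.length + 1) := by
  set k := u.length
  rw [norm_mul]
  have h1 : ‖((n:ℂ)+1)‖ = (n:ℝ) + 1 := by
    have : ((n:ℂ)+1) = ((n+1 : ℕ) : ℂ) := by push_cast; ring
    rw [this, Complex.norm_natCast]; push_cast; ring
  have h2 : ‖coef u (n+1)‖ ≤ (((n+1:ℕ):ℝ)+1) ^ k := coef_norm_le u (n+1)
  have h3 : (((n+1:ℕ):ℝ)+1) ^ k ≤ (2 * ((n:ℝ)+1)) ^ k := by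
    apply pow_le_pow_left₀ (by positivity)
    push_cast; linarith [Nat.cast_nonneg (α := ℝ) n]
  calc ‖((n:ℂ)+1)‖ * ‖coef u (n+1)‖ ≤ ((n:ℝ)+1) * (2 * ((n:ℝ)+1)) ^ k := by
        rw [h1]
        exact mul_le_mul_of_nonneg_left (h2.trans h3) (by positivity)
    _ = (2:ℝ)^k * ((n:ℝ)+1)^(k+1) := by rw [mul_pow, pow_succ]; ring

theorem hasDerivAt_tsum_coef {a : ℕ → ℂ} {C : ℝ} {k : ℕ}
    (ha : ∀ n, ‖a n‖ ≤ C * ((n : ℝ) + 1) ^ k) {z : ℂ} (hz : ‖z‖ < 1) :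
    HasDerivAt (fun y => ∑' n : ℕ, a n * y ^ n)
      (∑' n : ℕ, ((n : ℂ) + 1) * a (n + 1) * z ^ n) z := by
  have hC : 0 ≤ C := le_trans (norm_nonneg (a 0)) (by simpa using ha 0)
  set r : ℝ := (1 + ‖z‖) / 2 with hrdef
  have hr0 : 0 < r := by positivity
  have hr1 : r < 1 := by rw [hrdef]; linarith
  have hzr : ‖z‖ < r := by rw [hrdef]; linarith
  set t : Set ℂ := Metric.ball 0 r
  have hzt : z ∈ t := by simpa [t, Metric.mem_ball, Complex.dist_eq] using hzr
  -- uniform summable bound for derivatives on t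
  set u : ℕ → ℝ := fun n => (C * r⁻¹) * (((n:ℝ)+1) ^ (k+1) * r ^ n) with hudef
  have hu : Summable u := (summable_aux (k+1) hr0.le hr1).mul_left _
  have hbound : ∀ (n : ℕ), ∀ y ∈ t, ‖a n * ((n:ℂ) * y ^ (n-1))‖ ≤ u n := by
    intro n y hy
    have hyr : ‖y‖ ≤ r := by
      have := Metric.mem_ball.mp hy
      rw [Complex.dist_eq, sub_zero] at this
      exact this.le
    rw [norm_mul, norm_mul, norm_pow, Complex.norm_natCast]
    have e1 : ‖a n‖ ≤ C * ((n:ℝ)+1)^k := ha n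
    have e2 : ‖y‖ ^ (n-1) ≤ r ^ (n-1) := pow_le_pow_left₀ (norm_nonneg y) hyr _
    have e3 : r ^ (n-1) ≤ r ^ n * r⁻¹ := by
      rcases Nat.eq_zero_or_pos n with rfl | hn
      · simp only [Nat.zero_sub, pow_zero, one_mul]
        rw [one_le_inv_iff₀]
        exact ⟨hr0, hr1.le⟩
      · rw [pow_sub₀ _ hr0.ne' hn, pow_one]
    have e4 : (n:ℝ) ≤ (n:ℝ)+1 := by linarith
    calc ‖a n‖ * ((n:ℝ) * ‖y‖^(n-1))
        ≤ (C * ((n:ℝ)+1)^k) * (((n:ℝ)+1) * (r ^ n * r⁻¹)) := by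
          apply mul_le_mul e1 _ (by positivity) (by positivity)
          apply mul_le_mul e4 (e2.trans e3) (by positivity) (by linarith [Nat.cast_nonneg (α := ℝ) n])
      _ = u n := by rw [hudef]; simp only []; rw [pow_succ]; ring
  have key := hasDerivAt_tsum_of_isPreconnected hu Metric.isOpen_ball
    ((convex_ball (0:ℂ) r).isPreconnected)
    (fun n y _ => ((hasDerivAt_pow n y).const_mul (a n)))
    hbound hzt (summable_of_bound ha (lt_trans hzr hr1)) hzt
  -- rewrite the derivative tsum
  have hsum' : Summable (fun n => a n * ((n:ℂ) * z ^ (n-1))) := by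
    apply Summable.of_norm
    exact hu.of_nonneg_of_le (fun n => norm_nonneg _) (fun n => hbound n z hzt)
  have heq : (∑' n : ℕ, a n * ((n:ℂ) * z ^ (n-1)))
      = ∑' n : ℕ, ((n : ℂ) + 1) * a (n + 1) * z ^ n := by
    rw [Summable.tsum_eq_zero_add hsum']
    simp only [Nat.cast_zero, zero_mul, mul_zero, zero_add]
    apply tsum_congr
    intro n
    push_cast
    ring_nf
  rw [heq] at key
  exact key

theorem LiC_hasDerivAt (u : Comp) {z : ℂ} (hz : ‖z‖ < 1) :
    HasDerivAt (LiC u) (dLi u z) z := by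
  have h := hasDerivAt_tsum_coef (a := coef u) (C := 1) (k := u.length)
    (fun n => by simpa using coef_norm_le u n) hz
  have : LiC u = fun y => ∑' n : ℕ, coef u n * y ^ n := funext (fun y => LiC_eq_tsum u y)
  rw [this]
  exact h

theorem summable_coef (u : Comp) {z : ℂ} (hz : ‖z‖ < 1) :
    Summable (fun n => coef u n * z ^ n) :=
  summable_of_bound (C := 1) (fun n => by simpa using coef_norm_le u n) hz

theorem summable_Hc (u : Comp) {z : ℂ} (hz : ‖z‖ < 1) :
    Summable (fun n => Hc u n * z ^ n) := by
  apply summable_of_bound (C := 1) (k := u.length) (fun n => ?_) hz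
  rw [one_mul]
  refine (Hc_norm_le u n).trans (pow_le_pow_left₀ (by positivity) (by linarith) _)

theorem coef_zero_eq_Hc_zero (u : Comp) : coef u 0 = Hc u 0 := by
  cases u with
  | nil => rfl
  | cons s u =>
    rw [coef_cons, Hc_cons, Nat.cast_zero, zero_pow (s.pos.ne' : (s:ℕ) ≠ 0), inv_zero, zero_mul]
    simp

theorem Hc_succ_sub (u : Comp) (n : ℕ) : Hc u (n+1) - Hc u n = coef u (n+1) := by
  cases u with
  | nil => rw [Hc_nil, Hc_nil, coef_nil]; simp
  | cons s u =>
    rw [Hc_cons, Hc_cons, coef_cons, Finset.sum_Icc_succ_top (by omega)]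
    ring

theorem cast_succ_ne (n : ℕ) : ((n : ℂ) + 1) ≠ 0 := by
  have : ((n+1 : ℕ) : ℂ) ≠ 0 := by exact_mod_cast Nat.succ_ne_zero n
  push_cast at this
  exact this

set_option maxHeartbeats 1000000 in
/-- `(1 - z) * dLi (1 :: u) z = LiC u z` -/
theorem dLi_one (u : Comp) {z : ℂ} (hz : ‖z‖ < 1) :
    (1 - z) * dLi (1 :: u) z = LiC u z := by
  have e1 : dLi (1 :: u) z = ∑' n : ℕ, Hc u n * z ^ n := by
    apply tsum_congr
    intro n
    rw [coef_cons, Nat.add_sub_cancel]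
    have h1 : ((1:ℕ+):ℕ) = 1 := rfl
    have h2 : ((↑(n+1):ℕ) : ℂ) = (n:ℂ)+1 := by push_cast; ring
    rw [h1, pow_one, h2]
    rw [show ((n:ℂ)+1) * (((n:ℂ)+1)⁻¹ * Hc u n) * z^n
      = (((n:ℂ)+1) * ((n:ℂ)+1)⁻¹) * (Hc u n * z^n) by ring]
    rw [mul_inv_cancel₀ (cast_succ_ne n), one_mul]
  rw [e1]
  have S1 : Summable (fun n => Hc u n * z ^ n) := summable_Hc u hz
  have S2 : Summable (fun n => Hc u (n+1) * z ^ (n+1)) := (summable_nat_add_iff 1).mpr S1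
  have S3 : Summable (fun n => Hc u n * z ^ (n+1)) := by
    apply (S1.mul_right z).congr
    intro n; rw [pow_succ]; ring
  have TS : Summable (fun n => coef u n * z ^ n) := summable_coef u hz
  have lhs : (1 - z) * (∑' n : ℕ, Hc u n * z ^ n)
      = (∑' n : ℕ, Hc u n * z ^ n) - ∑' n : ℕ, Hc u n * z ^ (n+1) := by
    rw [sub_mul, one_mul]
    congr 1
    rw [← tsum_mul_left]
    apply tsum_congr
    intro n; rw [pow_succ]; ring
  rw [lhs, Summable.tsum_eq_zero_add S1, LiC_eq_tsum, Summable.tsum_eq_zero_add TS]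
  rw [pow_zero, mul_one, mul_one, coef_zero_eq_Hc_zero]
  rw [add_sub_assoc]
  congr 1
  rw [← Summable.tsum_sub S2 S3]
  apply tsum_congr
  intro n
  rw [← sub_mul, Hc_succ_sub]

/-- `z * dLi ((s+1) :: u) z = LiC (s :: u) z` -/
theorem dLi_succ (s : ℕ+) (u : Comp) {z : ℂ} (hz : ‖z‖ < 1) :
    z * dLi ((s + 1) :: u) z = LiC (s :: u) z := by
  have key : ∀ n : ℕ, ((n:ℂ)+1) * coef ((s+1)::u) (n+1) = coef (s::u) (n+1) := by
    intro n
    rw [coef_cons, coef_cons]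
    have hcast : (((s+1):ℕ+):ℕ) = (s:ℕ) + 1 := by rw [PNat.add_coe, PNat.one_coe]
    have h2 : ((↑(n+1):ℕ) : ℂ) = (n:ℂ)+1 := by push_cast; ring
    rw [hcast, pow_succ, h2, mul_inv]
    rw [show ((n:ℂ)+1) * ((((n:ℂ)+1) ^ (s:ℕ))⁻¹ * ((n:ℂ)+1)⁻¹ * Hc u ((n+1)-1))
      = (((n:ℂ)+1) * ((n:ℂ)+1)⁻¹) * ((((n:ℂ)+1) ^ (s:ℕ))⁻¹ * Hc u ((n+1)-1)) by ring]
    rw [mul_inv_cancel₀ (cast_succ_ne n), one_mul]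
  have e0 : z * dLi ((s+1)::u) z = ∑' n : ℕ, coef (s::u) (n+1) * z^(n+1) := by
    unfold dLi
    rw [← tsum_mul_left]
    apply tsum_congr
    intro n
    rw [← key n, pow_succ]
    ring
  rw [e0, LiC_eq_tsum, Summable.tsum_eq_zero_add (summable_coef (s::u) hz)]
  rw [pow_zero, mul_one, coef_zero_eq_Hc_zero, Hc_cons]
  simp

theorem LiC_zero {u : Comp} (h : u ≠ []) : LiC u 0 = 0 := by
  cases u with
  | nil => exact absurd rfl h
  | cons s u =>
    rw [LiC_eq_tsum]
    rw [tsum_eq_single 0 (fun n hn => by rw [zero_pow hn, mul_zero])]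
    rw [pow_zero, mul_one, coef_zero_eq_Hc_zero, Hc_cons]
    simp

theorem dLi_zero_val (u : Comp) : dLi u 0 = coef u 1 := by
  unfold dLi
  rw [tsum_eq_single 0 (fun n hn => by rw [zero_pow hn, mul_zero])]
  simp

/-! ## Word-level polylogarithms and the main induction -/

noncomputable def LW (w : List Bool) : ℂ → ℂ := LiC (toComp w)
noncomputable def dLW (w : List Bool) (z : ℂ) : ℂ := dLi (toComp w) z

theorem LW_hasDerivAt (w : List Bool) {z : ℂ} (hz : ‖z‖ < 1) :
    HasDerivAt (LW w) (dLW w z) z := LiC_hasDerivAt (toComp w) hz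

theorem dLW_rel {c : Bool} {w : List Bool} (hne : c = false → w ≠ []) {z : ℂ}
    (hz : ‖z‖ < 1) :
    z * (1 - z) * dLW (c :: w) z = (cond c z (1 - z)) * LW w z := by
  cases c with
  | true =>
    have h1 : toComp (true :: w) = 1 :: toComp w := rfl
    show z * (1 - z) * dLi (toComp (true :: w)) z = z * LiC (toComp w) z
    rw [h1, mul_assoc, dLi_one _ hz]
  | false =>
    have hw : w ≠ [] := hne rfl
    obtain ⟨s, u, hsu⟩ : ∃ s u, toComp w = s :: u := by
      rcases h' : toComp w with _ | ⟨s, u⟩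
      · exact absurd h' (toComp_ne_nil hw)
      · exact ⟨s, u, rfl⟩
    have h1 : toComp (false :: w) = (s+1) :: u := by
      show (match toComp w with
        | [] => [1]
        | s :: u => (s+1) :: u) = (s+1) :: u
      rw [hsu]
    show z * (1 - z) * dLi (toComp (false :: w)) z = (1 - z) * LiC (toComp w) z
    rw [h1, hsu]
    rw [show z * (1 - z) * dLi ((s+1) :: u) z = (1 - z) * (z * dLi ((s+1) :: u) z) by ring,
      dLi_succ s u hz]

def lol : ℕ → Finset (List Bool)
  | 0 => {[]}
  | n+1 => ((lol n).image (List.cons true)) ∪ ((lol n).image (List.cons false))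

theorem mem_lol {n : ℕ} {w : List Bool} : w ∈ lol n ↔ w.length = n := by
  induction n generalizing w with
  | zero => simp [lol, List.length_eq_zero_iff]
  | succ n ih =>
    simp only [lol, Finset.mem_union, Finset.mem_image]
    constructor
    · rintro (⟨w', hw', rfl⟩ | ⟨w', hw', rfl⟩) <;> simp [ih.mp hw']
    · intro hl
      cases w with
      | nil => simp at hl
      | cons c w' =>
        have hw' : w'.length = n := by simpa using hl
        cases c
        · right; exact ⟨w', ih.mpr hw', rfl⟩
        · left; exact ⟨w', ih.mpr hw', rfl⟩

theorem Wd_true_cons (t : List Bool) (h : Wd t) : Wd (true :: t) := by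
  cases t with
  | nil => simp [Wd]
  | cons x l => exact Wd_cons h (by simp)

theorem Wd_piX (u : Comp) : Wd (piX u) := by
  induction u with
  | nil => show Wd []; simp [Wd]
  | cons s u ih =>
    rw [piX_cons]
    show (List.replicate ((s:ℕ)-1) false ++ true :: piX u).getLast? ≠ some false
    rw [List.getLast?_append_cons]
    exact Wd_true_cons _ ih

theorem count_true_pos {w : List Bool} (hW : Wd w) (hne : w ≠ []) :
    0 < w.count true := by
  have h1 : w.getLast? = some (w.getLast hne) := List.getLast?_eq_getLast_of_ne_nil hne
  have h2 : w.getLast hne = true := by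
    rcases Bool.eq_false_or_eq_true (w.getLast hne) with h | h
    · exact h
    · exact absurd (by rw [h1, h]) hW
  have h3 : true ∈ w := h2 ▸ List.getLast_mem hne
  exact List.count_pos_iff.mpr h3

theorem LW_nil (z : ℂ) : LW [] z = 1 := rfl

theorem LW_zero {w : List Bool} (h : w ≠ []) : LW w 0 = 0 :=
  LiC_zero (toComp_ne_nil h)

set_option maxHeartbeats 1000000 in
theorem key_shuffle : ∀ n : ℕ, ∀ wu wv : List Bool,
    wu.length + wv.length = n → Wd wu → Wd wv → ∀ z : ℂ, ‖z‖ < 1 →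
    LW wu z * LW wv z = ∑ w ∈ lol n, (shufW wu wv w : ℂ) * LW w z := by
  intro n
  induction n using Nat.strong_induction_on with
  | _ n IH =>
  intro wu wv hlen hWu hWv z hz
  rcases wu with _ | ⟨a, u'⟩
  · rw [LW_nil, one_mul]
    have hwv : wv ∈ lol n := mem_lol.mpr (by simpa using hlen)
    have hstep : ∀ w ∈ lol n, (shufW [] wv w : ℂ) * LW w z
        = if w = wv then LW w z else 0 := by
      intro w _
      rw [shufW_nil_left]
      split <;> simp
    rw [Finset.sum_congr rfl hstep, Finset.sum_ite_eq' (lol n) wv, if_pos hwv]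
  rcases wv with _ | ⟨b, v'⟩
  · rw [LW_nil, mul_one]
    have hwu : (a :: u') ∈ lol n := mem_lol.mpr (by simpa using hlen)
    have hstep : ∀ w ∈ lol n, (shufW (a :: u') [] w : ℂ) * LW w z
        = if w = a :: u' then LW w z else 0 := by
      intro w _
      rw [shufW_nil_right]
      split <;> simp
    rw [Finset.sum_congr rfl hstep, Finset.sum_ite_eq' (lol n) (a :: u'), if_pos hwu]
  -- main case : both nonempty
  obtain ⟨m, rfl⟩ : ∃ m, n = m + 1 := ⟨n - 1, by simp at hlen; omega⟩
  have hm1 : 1 ≤ m := by simp at hlen; omega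
  set cst : List Bool → ℂ := fun w => (shufW (a :: u') (b :: v') w : ℂ) with hcst
  set F : ℂ → ℂ := fun y => LW (a :: u') y * LW (b :: v') y
    - ∑ w ∈ lol (m+1), cst w * LW w y with hF
  set G : ℂ → ℂ := fun y => dLW (a :: u') y * LW (b :: v') y
    + LW (a :: u') y * dLW (b :: v') y
    - ∑ w ∈ lol (m+1), cst w * dLW w y with hG
  have hFd : ∀ y : ℂ, ‖y‖ < 1 → HasDerivAt F (G y) y := by
    intro y hy
    exact ((LW_hasDerivAt _ hy).mul (LW_hasDerivAt _ hy)).sub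
      (HasDerivAt.fun_sum (fun w _ => (LW_hasDerivAt w hy).const_mul (cst w)))
  have hG0 : ∀ y : ℂ, ‖y‖ < 1 → G y = 0 := by
    intro y hy
    rcases eq_or_ne y 0 with rfl | hy0
    · -- value at 0
      have l1 : LW (a :: u') 0 = 0 := LW_zero (by simp)
      have l2 : LW (b :: v') 0 = 0 := LW_zero (by simp)
      have l3 : ∀ w ∈ lol (m+1), cst w * dLW w 0 = 0 := by
        intro w hw
        by_cases hc : shufW (a :: u') (b :: v') w = 0
        · rw [hcst]; simp [hc]
        have hWw : Wd w := shufW_Wd _ _ _ hWu hWv hc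
        have hwne : w ≠ [] := by
          intro h
          rw [h] at hw
          have := mem_lol.mp hw
          simp at this
        obtain ⟨s, c, hsc⟩ : ∃ s c, toComp w = s :: c := by
          rcases h' : toComp w with _ | ⟨s, c⟩
          · exact absurd h' (toComp_ne_nil hwne)
          · exact ⟨s, c, rfl⟩
        have hd : dLW w 0 = coef (s :: c) 1 := by
          rw [dLW, dLi_zero_val, hsc]
        rw [coef_cons] at hd
        rcases c with _ | ⟨t, c'⟩
        · -- toComp w = [s] : impossible by counting trues
          exfalso
          have hwp : w = piX [s] := by rw [← piX_toComp hWw, hsc]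
          have hcount1 : w.count true = 1 := by
            rw [hwp, piX_cons]
            show (List.replicate ((s:ℕ)-1) false ++ true :: piX []).count true = 1
            rw [List.count_append]
            simp [List.count_replicate, piX]
          have hcount2 := shufW_count _ _ _ hc
          have c1 : 0 < (a :: u').count true := count_true_pos hWu (by simp)
          have c2 : 0 < (b :: v').count true := count_true_pos hWv (by simp)
          omega
        · -- Hc (t :: c') 0 = 0
          rw [Hc_cons] at hd
          simp only [Nat.sub_self, Finset.Icc_self] at hd
          have : dLW w 0 = 0 := by
            rw [hd]
            simp
          rw [this, mul_zero]
      rw [hG]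
      simp only [l1, l2, mul_zero, zero_mul, add_zero, zero_add, zero_sub, neg_eq_zero]
      exact Finset.sum_eq_zero l3
    · -- y ≠ 0
      have hy1 : y ≠ 1 := by
        intro h
        rw [h] at hy
        simp at hy
      have hmul : y * (1 - y) ≠ 0 := mul_ne_zero hy0 (sub_ne_zero.mpr (Ne.symm hy1))
      have hkey : y * (1 - y) * G y = 0 := by
        have expand : y * (1 - y) * G y
            = (y * (1 - y) * dLW (a :: u') y) * LW (b :: v') y
            + LW (a :: u') y * (y * (1 - y) * dLW (b :: v') y)
            - ∑ w ∈ lol (m+1), cst w * (y * (1 - y) * dLW w y) := by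
          rw [hG]
          simp only []
          rw [mul_sub, mul_add, Finset.mul_sum]
          congr 1
          · congr 1 <;> ring
          · apply Finset.sum_congr rfl
            intro w _
            ring
        have hrel_u : y * (1 - y) * dLW (a :: u') y = cond a y (1 - y) * LW u' y :=
          dLW_rel (fun h => Wd_false_ne_nil (h ▸ hWu)) hy
        have hrel_v : y * (1 - y) * dLW (b :: v') y = cond b y (1 - y) * LW v' y :=
          dLW_rel (fun h => Wd_false_ne_nil (h ▸ hWv)) hy
        -- transform the sum
        have hinj_t : ∀ x ∈ lol m, ∀ x' ∈ lol m,
            List.cons true x = List.cons true x' → x = x' := by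
          intro x _ x' _ h; simpa using h
        have hinj_f : ∀ x ∈ lol m, ∀ x' ∈ lol m,
            List.cons false x = List.cons false x' → x = x' := by
          intro x _ x' _ h; simpa using h
        have hdisj : Disjoint ((lol m).image (List.cons true))
            ((lol m).image (List.cons false)) := by
          rw [Finset.disjoint_left]
          rintro w hw1 hw2
          obtain ⟨x, _, rfl⟩ := Finset.mem_image.mp hw1
          obtain ⟨x', _, hx'⟩ := Finset.mem_image.mp hw2
          simp at hx'
        have hsplit : lol (m+1) = ((lol m).image (List.cons true))
            ∪ ((lol m).image (List.cons false)) := rfl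
        have hsum : ∑ w ∈ lol (m+1), cst w * (y * (1 - y) * dLW w y)
            = ∑ w' ∈ lol m, (cst (true :: w') * (y * (1 - y) * dLW (true :: w') y)
              + cst (false :: w') * (y * (1 - y) * dLW (false :: w') y)) := by
          rw [hsplit, Finset.sum_union hdisj, Finset.sum_image hinj_t,
            Finset.sum_image hinj_f, ← Finset.sum_add_distrib]
        have hterm : ∀ w' ∈ lol m,
            cst (true :: w') * (y * (1 - y) * dLW (true :: w') y)
              + cst (false :: w') * (y * (1 - y) * dLW (false :: w') y)
            = (shufW u' (b :: v') w' : ℂ) * (cond a y (1 - y) * LW w' y)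
              + (shufW (a :: u') v' w' : ℂ) * (cond b y (1 - y) * LW w' y) := by
          intro w' hw'
          have hw'ne : w' ≠ [] := by
            intro h
            rw [h] at hw'
            have := mem_lol.mp hw'
            simp at this
            omega
          rw [dLW_rel (fun _ => hw'ne) hy, dLW_rel (fun _ => hw'ne) hy]
          rw [hcst]
          simp only [shufW_cons_cons]
          cases a <;> cases b <;> simp <;> push_cast <;> ring
        have hIH1 : ∑ w' ∈ lol m, (shufW u' (b :: v') w' : ℂ) * LW w' y
            = LW u' y * LW (b :: v') y := by
          symm
          apply IH m (by omega) u' (b :: v') _ (Wd_tail hWu) hWv y hy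
          simp at hlen ⊢
          omega
        have hIH2 : ∑ w' ∈ lol m, (shufW (a :: u') v' w' : ℂ) * LW w' y
            = LW (a :: u') y * LW v' y := by
          symm
          apply IH m (by omega) (a :: u') v' _ hWu (Wd_tail hWv) y hy
          simp at hlen ⊢
          omega
        rw [expand, hrel_u, hrel_v, hsum, Finset.sum_congr rfl hterm,
          Finset.sum_add_distrib]
        have e1 : ∑ w' ∈ lol m, (shufW u' (b :: v') w' : ℂ) * (cond a y (1 - y) * LW w' y)
            = cond a y (1 - y) * (LW u' y * LW (b :: v') y) := by
          rw [← hIH1, Finset.mul_sum]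
          apply Finset.sum_congr rfl
          intro w' _
          ring
        have e2 : ∑ w' ∈ lol m, (shufW (a :: u') v' w' : ℂ) * (cond b y (1 - y) * LW w' y)
            = cond b y (1 - y) * (LW (a :: u') y * LW v' y) := by
          rw [← hIH2, Finset.mul_sum]
          apply Finset.sum_congr rfl
          intro w' _
          ring
        rw [e1, e2]
        ring
      rcases mul_eq_zero.mp hkey with h | h
      · exact absurd h hmul
      · exact h
  -- F has zero derivative on the ball, hence is constant
  have hF0 : ∀ y ∈ Metric.ball (0:ℂ) 1, HasFDerivWithinAt F
      ((1 : ℂ →L[ℂ] ℂ).smulRight (0:ℂ)) (Metric.ball (0:ℂ) 1) y := by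
    intro y hy
    have hy' : ‖y‖ < 1 := by simpa [Metric.mem_ball, Complex.dist_eq] using hy
    have := hFd y hy'
    rw [hG0 y hy'] at this
    exact this.hasFDerivAt.hasFDerivWithinAt
  have hbound : ∀ y ∈ Metric.ball (0:ℂ) 1,
      ‖(1 : ℂ →L[ℂ] ℂ).smulRight (0:ℂ)‖ ≤ 0 := by
    intro y _
    have : (1 : ℂ →L[ℂ] ℂ).smulRight (0:ℂ) = 0 := by
      ext x
      simp
    rw [this, norm_zero]
  have hzball : z ∈ Metric.ball (0:ℂ) 1 := by
    simpa [Metric.mem_ball, Complex.dist_eq] using hz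
  have h0ball : (0:ℂ) ∈ Metric.ball (0:ℂ) 1 := by
    simp
  have hconst := (convex_ball (0:ℂ) 1).norm_image_sub_le_of_norm_hasFDerivWithin_le
    hF0 hbound h0ball hzball
  rw [zero_mul] at hconst
  have hFz0 : F z = F 0 := by
    have := le_antisymm hconst (norm_nonneg _)
    rwa [norm_eq_zero, sub_eq_zero] at this
  have hF00 : F 0 = 0 := by
    rw [hF]
    simp only []
    rw [LW_zero (show (a :: u') ≠ [] by simp), zero_mul, zero_sub, neg_eq_zero]
    apply Finset.sum_eq_zero
    intro w hw
    have hwne : w ≠ [] := by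
      intro h
      rw [h] at hw
      have := mem_lol.mp hw
      simp at this
    rw [LW_zero hwne, mul_zero]
  have hfin : F z = 0 := hFz0.trans hF00
  rw [hF] at hfin
  simp only [hcst] at hfin
  exact sub_eq_zero.mp hfin

/-- `Li_•` is a shuffle character: for all compositions `u, v` and `|z| < 1`,
`Li_u(z)·Li_v(z) = Σ_w (u ⧢ v)(w)·Li_w(z)` (a finite sum over compositions,
realized as a `tsum`). -/
theorem li_shuffle_character (u v : Comp) (z : ℂ) (hz : ‖z‖ < 1) :
    LiC u z * LiC v z = ∑' w : Comp, (shufC u v w : ℂ) * LiC w z := by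
  have hk := key_shuffle ((piX u).length + (piX v).length) (piX u) (piX v) rfl
    (Wd_piX u) (Wd_piX v) z hz
  have hLWu : LW (piX u) = LiC u := by rw [LW, toComp_piX]
  have hLWv : LW (piX v) = LiC v := by rw [LW, toComp_piX]
  rw [hLWu, hLWv] at hk
  have hts : ∑' w : Comp, (shufC u v w : ℂ) * LiC w z
      = ∑ c ∈ ((lol ((piX u).length + (piX v).length)).filter
          (fun w => piX (toComp w) = w)).image toComp,
        (shufC u v c : ℂ) * LiC c z := by
    apply tsum_eq_sum
    intro c hc
    have hzero : shufC u v c = 0 := by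
      by_contra hne
      apply hc
      have h1 : (piX c).length = (piX u).length + (piX v).length :=
        shufW_length (piX u) (piX v) (piX c) hne
      rw [Finset.mem_image]
      refine ⟨piX c, ?_, toComp_piX c⟩
      rw [Finset.mem_filter]
      exact ⟨mem_lol.mpr h1, by rw [toComp_piX]⟩
    rw [hzero]
    simp
  have hinj : ∀ w ∈ (lol ((piX u).length + (piX v).length)).filter
      (fun w => piX (toComp w) = w),
      ∀ w' ∈ (lol ((piX u).length + (piX v).length)).filter
      (fun w => piX (toComp w) = w), toComp w = toComp w' → w = w' := by
    intro w hw w' hw' h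
    have e1 : piX (toComp w) = w := (Finset.mem_filter.mp hw).2
    have e2 : piX (toComp w') = w' := (Finset.mem_filter.mp hw').2
    rw [← e1, ← e2, h]
  rw [hts, Finset.sum_image hinj]
  have hTsum : ∑ w ∈ (lol ((piX u).length + (piX v).length)).filter
      (fun w => piX (toComp w) = w), (shufC u v (toComp w) : ℂ) * LiC (toComp w) z
      = ∑ w ∈ (lol ((piX u).length + (piX v).length)).filter
      (fun w => piX (toComp w) = w), (shufW (piX u) (piX v) w : ℂ) * LW w z := by
    apply Finset.sum_congr rfl
    intro w hw
    have e1 : piX (toComp w) = w := (Finset.mem_filter.mp hw).2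
    rw [shufC, e1, LW]
  rw [hTsum]
  have hsub : ∑ w ∈ (lol ((piX u).length + (piX v).length)).filter
      (fun w => piX (toComp w) = w), (shufW (piX u) (piX v) w : ℂ) * LW w z
      = ∑ w ∈ lol ((piX u).length + (piX v).length),
        (shufW (piX u) (piX v) w : ℂ) * LW w z := by
    apply Finset.sum_subset (Finset.filter_subset _ _)
    intro w hw hnw
    have hzero : shufW (piX u) (piX v) w = 0 := by
      by_contra hne
      apply hnw
      rw [Finset.mem_filter]
      exact ⟨hw, piX_toComp (shufW_Wd _ _ _ (Wd_piX u) (Wd_piX v) hne)⟩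
    rw [hzero]
    simp
  rw [hsub]
  exact hk
end

section
/- Let (α_n)_{n≥1} and (β_n)_{n≥1} be complex numbers. Define the Kleene star A* of the degree-one series A = Σ_{n≥1} α_n y_n as the ℂ-valued function on compositions with A*((s₁,…,s_r)) = α_{s₁}⋯α_{s_r} (and A*(ε) = 1), and likewise B* from (β_n). Then A* ⧛ B* = C*, where C* is the Kleene star built from the coefficients c_n := α_n + β_n + Σ_{i+j=n, i,j≥1} α_i β_j; explicitly, for every composition w = (s₁,…,s_r): (A* ⧛ B*)(w) = ∏_{i=1}^{r} ( α_{s_i} + β_{s_i} + Σ_{p+q=s_i, p,q≥1} α_p β_q ). -/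
open scoped NNReal ENNReal

/-- Stuffle coefficient on compositions: `⟨u ⧛ v, w⟩`, defined by
`u ⧛ ε = ε ⧛ u = u` and
`(s::u) ⧛ (t::v) = s::(u ⧛ (t::v)) + t::((s::u) ⧛ v) + (s+t)::(u ⧛ v)`. -/
def stuf : Comp → Comp → Comp → ℤ
  | [], v, w => if w = v then 1 else 0
  | u, [], w => if w = u then 1 else 0
  | _ :: _, _ :: _, [] => 0
  | s :: u, t :: v, c :: w =>
      (if c = s then stuf u (t :: v) w else 0) +
      (if c = t then stuf (s :: u) v w else 0) +
      (if c = s + t then stuf u v w else 0)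
termination_by u v _ => u.length + v.length

/-- Bilinear extension of the stuffle to `ℂ`-valued functions on compositions
(a finite sum for each `w`, realized as a `tsum`). -/
noncomputable def stufA (α β : Comp → ℂ) : Comp → ℂ :=
  fun w => ∑' p : Comp × Comp, α p.1 * β p.2 * (stuf p.1 p.2 w : ℂ)

/-- The Kleene star of the degree-one series `Σ_{n≥1} α_n y_n`:
`A*((s₁,…,s_r)) = α_{s₁} ⋯ α_{s_r}`, `A*(ε) = 1`. -/
noncomputable def star (α : ℕ → ℂ) : Comp → ℂ :=
  fun s => (s.map fun p => α (p : ℕ)).prod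

/-! ### Auxiliary lemmas -/

lemma stuf_nil_left (v w : Comp) : stuf [] v w = if w = v then 1 else 0 := by simp [stuf]

lemma stuf_nil_right (u w : Comp) : stuf u [] w = if w = u then 1 else 0 := by
  cases u <;> simp [stuf]

lemma stuf_cons_cons_nil (s t : ℕ+) (u v : Comp) : stuf (s::u) (t::v) [] = 0 := by simp [stuf]

lemma stuf_cons_cons (s t c : ℕ+) (u v w : Comp) : stuf (s::u) (t::v) (c::w) =
      (if c = s then stuf u (t :: v) w else 0) +
      (if c = t then stuf (s :: u) v w else 0) +
      (if c = s + t then stuf u v w else 0) := by rw [stuf]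

/-- weight of a composition -/
def wt (l : Comp) : ℕ := (l.map (fun p : ℕ+ => (p : ℕ))).sum

@[simp] lemma wt_nil : wt [] = 0 := rfl
@[simp] lemma wt_cons (s : ℕ+) (u : Comp) : wt (s :: u) = (s : ℕ) + wt u := by simp [wt]

lemma stuf_wt : ∀ u v w : Comp, stuf u v w ≠ 0 → wt u + wt v = wt w := by
  intro u v w
  induction u, v, w using stuf.induct with
  | case1 w => simp
  | case2 v w h => simp [stuf_nil_left, h]
  | case3 w h => simp
  | case4 u w h1 h2 => simp [stuf_nil_right, h2]
  | case5 s u t v => simp [stuf_cons_cons_nil]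
  | case6 s u t v c w ih1 ih2 ih3 =>
    rw [stuf_cons_cons]
    intro h
    have : (if c = s then stuf u (t :: v) w else 0) ≠ 0 ∨
        (if c = t then stuf (s :: u) v w else 0) ≠ 0 ∨
        (if c = s + t then stuf u v w else 0) ≠ 0 := by
      by_contra hc
      push_neg at hc
      simp [hc.1, hc.2.1, hc.2.2] at h
    rcases this with h1 | h1 | h1 <;> rw [ite_ne_right_iff] at h1 <;>
      obtain ⟨rfl, h1⟩ := h1
    · have := ih1 h1; simp_all; omega
    · have := ih2 h1; simp_all; omega
    · have := ih3 h1; simp_all [PNat.add_coe]; omega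

/-- turn a list of positive naturals into a `Comp` -/
def toPComp (l : List ℕ) (h : ∀ x ∈ l, 0 < x) : Comp :=
  l.attach.map fun x => ⟨x.1, h x.1 x.2⟩

lemma toPComp_map_val (l : List ℕ) (h : ∀ x ∈ l, 0 < x) :
    (toPComp l h).map (fun p : ℕ+ => (p : ℕ)) = l := by
  unfold toPComp
  exact List.map_map.trans (List.attach_map_subtype_val l)

/-- all compositions of weight at most `n` -/
noncomputable def compFinset (n : ℕ) : Finset Comp :=
  (Finset.range (n+1)).biUnion fun m =>
    Finset.univ.image fun c : Composition m => toPComp c.blocks fun _ h => c.blocks_pos h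

lemma mem_compFinset {u : Comp} {n : ℕ} (h : wt u ≤ n) : u ∈ compFinset n := by
  rw [compFinset, Finset.mem_biUnion]
  refine ⟨wt u, Finset.mem_range.mpr (by omega), ?_⟩
  rw [Finset.mem_image]
  have hpos : ∀ i ∈ u.map (fun p : ℕ+ => (p : ℕ)), 0 < i := by
    intro i hi
    simp only [List.mem_map] at hi
    obtain ⟨p, _, rfl⟩ := hi
    exact p.2
  refine ⟨⟨u.map (fun p : ℕ+ => (p : ℕ)), fun {i} hi => hpos i hi, rfl⟩, Finset.mem_univ _, ?_⟩
  apply List.map_injective_iff.mpr PNat.coe_injective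
  exact toPComp_map_val _ _

@[simp] lemma star_nil (α : ℕ → ℂ) : star α [] = 1 := by unfold _root_.star; simp

@[simp] lemma star_cons (α : ℕ → ℂ) (s : ℕ+) (u : Comp) :
    star α (s :: u) = α (s : ℕ) * star α u := by
  unfold _root_.star
  simp

lemma stufA_eq_sum (A B : Comp → ℂ) (w : Comp) {T : Finset (Comp × Comp)}
    (hT : ∀ p : Comp × Comp, stuf p.1 p.2 w ≠ 0 → p ∈ T) :
    stufA A B w = ∑ p ∈ T, A p.1 * B p.2 * (stuf p.1 p.2 w : ℂ) :=
  tsum_eq_sum fun b hb => by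
    have : stuf b.1 b.2 w = 0 := by_contra fun h => hb (hT b h)
    simp [this]

lemma nil_not_mem_image_cons (Z : Finset (ℕ+ × Comp)) :
    ([] : Comp) ∉ Z.image fun b => b.1 :: b.2 := by simp

lemma cons_inj_on (Z : Finset (ℕ+ × Comp)) :
    Set.InjOn (fun b : ℕ+ × Comp => b.1 :: b.2) Z := by
  intro a _ b _ h
  simp only [List.cons.injEq] at h
  exact Prod.ext h.1 h.2

lemma mem_Icc_of_le {M : ℕ+} {t : ℕ+} (h : (t : ℕ) ≤ (M : ℕ)) : t ∈ Finset.Icc 1 M :=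
  Finset.mem_Icc.mpr ⟨t.one_le, (PNat.coe_le_coe _ _).mp h⟩

lemma rep3 (α β : ℕ → ℂ) (w : Comp) {N : ℕ} (hN : wt w ≤ N) :
    stufA (star α) (star β) w =
      ∑ u ∈ compFinset N, ∑ v ∈ compFinset N,
        star α u * star β v * (stuf u v w : ℂ) := by
  rw [stufA_eq_sum (star α) (star β) w (T := compFinset N ×ˢ compFinset N)
    (fun p hp => by
      have h := stuf_wt _ _ _ hp
      exact Finset.mem_product.mpr ⟨mem_compFinset (by omega), mem_compFinset (by omega)⟩),
    Finset.sum_product]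

lemma rep1 (α β : ℕ → ℂ) (w : Comp) {N : ℕ} {M : ℕ+} (hN : wt w ≤ N) (hM : N ≤ (M : ℕ)) :
    stufA (star α) (star β) w =
      star α w + ∑ u ∈ compFinset N, ∑ t ∈ Finset.Icc 1 M, ∑ v ∈ compFinset N,
        star α u * star β (t :: v) * (stuf u (t :: v) w : ℂ) := by
  classical
  set S := compFinset N with hS
  set I := Finset.Icc (1:ℕ+) M with hI
  rw [stufA_eq_sum (star α) (star β) w
    (T := S ×ˢ (insert ([] : Comp) ((I ×ˢ S).image fun b => b.1 :: b.2)))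
    (fun p hp => by
      obtain ⟨p1, p2⟩ := p
      have h := stuf_wt _ _ _ hp
      dsimp only at h hp ⊢
      refine Finset.mem_product.mpr ⟨mem_compFinset (show wt p1 ≤ N by omega), ?_⟩
      match p2, h with
      | [], _ => exact Finset.mem_insert_self _ _
      | t :: v, h =>
        refine Finset.mem_insert_of_mem (Finset.mem_image.mpr ⟨(t, v), ?_, rfl⟩)
        simp only [wt_cons] at h
        refine Finset.mem_product.mpr
          ⟨mem_Icc_of_le (show (t:ℕ) ≤ (M:ℕ) by omega), mem_compFinset (show wt v ≤ N by omega)⟩),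
    Finset.sum_product]
  have key : ∀ u ∈ S,
      (∑ v ∈ insert ([] : Comp) ((I ×ˢ S).image fun b => b.1 :: b.2),
        star α u * star β v * (stuf u v w : ℂ)) =
      (if w = u then star α u else 0) +
        ∑ t ∈ I, ∑ v ∈ S, star α u * star β (t :: v) * (stuf u (t :: v) w : ℂ) := by
    intro u _
    rw [Finset.sum_insert (nil_not_mem_image_cons _),
      Finset.sum_image (fun a ha b hb h => cons_inj_on _ ha hb h), Finset.sum_product]
    congr 1
    rw [stuf_nil_right]
    split <;> simp
  rw [Finset.sum_congr rfl key, Finset.sum_add_distrib, Finset.sum_ite_eq,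
    if_pos (mem_compFinset hN)]

lemma rep2 (α β : ℕ → ℂ) (w : Comp) {N : ℕ} {M : ℕ+} (hN : wt w ≤ N) (hM : N ≤ (M : ℕ)) :
    stufA (star α) (star β) w =
      star β w + ∑ s ∈ Finset.Icc 1 M, ∑ u ∈ compFinset N, ∑ v ∈ compFinset N,
        star α (s :: u) * star β v * (stuf (s :: u) v w : ℂ) := by
  classical
  set S := compFinset N with hS
  set I := Finset.Icc (1:ℕ+) M with hI
  rw [stufA_eq_sum (star α) (star β) w
    (T := (insert ([] : Comp) ((I ×ˢ S).image fun b => b.1 :: b.2)) ×ˢ S)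
    (fun p hp => by
      obtain ⟨p1, p2⟩ := p
      have h := stuf_wt _ _ _ hp
      dsimp only at h hp ⊢
      refine Finset.mem_product.mpr ⟨?_, mem_compFinset (show wt p2 ≤ N by omega)⟩
      match p1, h with
      | [], _ => exact Finset.mem_insert_self _ _
      | s :: u, h =>
        refine Finset.mem_insert_of_mem (Finset.mem_image.mpr ⟨(s, u), ?_, rfl⟩)
        simp only [wt_cons] at h
        refine Finset.mem_product.mpr
          ⟨mem_Icc_of_le (show (s:ℕ) ≤ (M:ℕ) by omega), mem_compFinset (show wt u ≤ N by omega)⟩),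
    Finset.sum_product]
  rw [Finset.sum_insert (nil_not_mem_image_cons _),
    Finset.sum_image (fun a ha b hb h => cons_inj_on _ ha hb h)]
  congr 1
  · have : ∀ v ∈ S, star α [] * star β v * (stuf [] v w : ℂ) =
        (if w = v then star β v else 0) := by
      intro v _
      rw [stuf_nil_left]
      split <;> simp
    rw [Finset.sum_congr rfl this, Finset.sum_ite_eq, if_pos (mem_compFinset hN)]
  · rw [Finset.sum_product]

lemma toPNat'_val {n : ℕ} (h : 0 < n) : ((n.toPNat' : ℕ)) = n := by
  simp [Nat.toPNat'_coe, h]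

lemma conv_sum (α β : ℕ → ℂ) (c M : ℕ+) (hcM : (c:ℕ) ≤ (M:ℕ)) :
    (∑ s ∈ Finset.Icc 1 M, ∑ t ∈ Finset.Icc 1 M,
      if c = s + t then α (s:ℕ) * β (t:ℕ) else 0)
    = ∑ i ∈ Finset.Ico 1 (c:ℕ), α i * β ((c:ℕ) - i) := by
  classical
  rw [← Finset.sum_product']
  rw [← Finset.sum_filter]
  refine Finset.sum_nbij' (fun p => ((p.1 : ℕ+) : ℕ))
    (fun k => (k.toPNat', ((c:ℕ) - k).toPNat')) ?_ ?_ ?_ ?_ ?_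
  · rintro ⟨s, t⟩ ha
    simp only [Finset.mem_filter, Finset.mem_product, Finset.mem_Icc] at ha
    obtain ⟨⟨hs, ht⟩, hc⟩ := ha
    have hcc : (c:ℕ) = (s:ℕ) + (t:ℕ) := by rw [hc]; exact PNat.add_coe s t
    have hs1 : 0 < (s:ℕ) := s.pos
    have ht1 : 0 < (t:ℕ) := t.pos
    simp only [Finset.mem_Ico]
    exact ⟨by omega, by omega⟩
  · intro k hk
    simp only [Finset.mem_Ico] at hk
    obtain ⟨hk1, hk2⟩ := hk
    have h1 : 0 < k := hk1
    have h2 : 0 < (c:ℕ) - k := by omega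
    simp only [Finset.mem_filter, Finset.mem_product, Finset.mem_Icc]
    refine ⟨⟨⟨(k.toPNat').one_le, ?_⟩, (((c:ℕ) - k).toPNat').one_le, ?_⟩, ?_⟩
    · rw [← PNat.coe_le_coe, toPNat'_val h1]; omega
    · rw [← PNat.coe_le_coe, toPNat'_val h2]; omega
    · apply PNat.coe_injective
      rw [PNat.add_coe, toPNat'_val h1, toPNat'_val h2]
      omega
  · rintro ⟨s, t⟩ ha
    simp only [Finset.mem_filter, Finset.mem_product, Finset.mem_Icc] at ha
    obtain ⟨⟨hs, ht⟩, hc⟩ := ha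
    have hcc : (c:ℕ) = (s:ℕ) + (t:ℕ) := by rw [hc]; exact PNat.add_coe s t
    have hs1 : 0 < (s:ℕ) := s.pos
    have ht1 : 0 < (t:ℕ) := t.pos
    have e1 : ((s:ℕ)).toPNat' = s := by
      apply PNat.coe_injective
      exact toPNat'_val hs1
    have e2 : (((c:ℕ)) - ((s:ℕ))).toPNat' = t := by
      apply PNat.coe_injective
      rw [toPNat'_val (by omega)]
      omega
    show ((((s:ℕ)).toPNat', (((c:ℕ)) - ((s:ℕ))).toPNat') : ℕ+ × ℕ+) = (s, t)
    rw [e1, e2]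
  · intro k hk
    simp only [Finset.mem_Ico] at hk
    exact toPNat'_val hk.1
  · rintro ⟨s, t⟩ ha
    simp only [Finset.mem_filter, Finset.mem_product, Finset.mem_Icc] at ha
    obtain ⟨⟨hs, ht⟩, hc⟩ := ha
    have hcc : (c:ℕ) = (s:ℕ) + (t:ℕ) := by rw [hc]; exact PNat.add_coe s t
    have ht1 : 0 < (t:ℕ) := t.pos
    show α (s:ℕ) * β (t:ℕ) = α (s:ℕ) * β ((c:ℕ) - (s:ℕ))
    congr 2
    omega

/-- Stuffle of Kleene stars of degree-one series:
`A* ⧛ B* = C*` with `c_n = α_n + β_n + Σ_{i+j=n, i,j≥1} α_i β_j`. -/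
theorem stuffle_of_kleene_stars (α β : ℕ → ℂ) (w : Comp) :
    stufA (star α) (star β) w =
      (w.map fun p =>
        α (p : ℕ) + β (p : ℕ) +
          ∑ i ∈ Finset.Ico 1 (p : ℕ), α i * β ((p : ℕ) - i)).prod := by
  classical
  show stufA (star α) (star β) w =
    star (fun n => α n + β n + ∑ i ∈ Finset.Ico 1 n, α i * β (n - i)) w
  induction w with
  | nil =>
    rw [stufA_eq_sum (star α) (star β) [] (T := {(([]:Comp), ([]:Comp))})
      (fun p hp => by
        obtain ⟨p1, p2⟩ := p
        match p1, p2, hp with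
        | [], [], _ => exact Finset.mem_singleton_self _
        | [], x :: v, hp => simp [stuf_nil_left] at hp
        | s :: u, [], hp => simp [stuf_nil_right] at hp
        | s :: u, t :: v, hp => simp [stuf_cons_cons_nil] at hp)]
    simp [stuf_nil_left]
  | cons c w' ih =>
    have hpos : 0 < (c:ℕ) + wt w' := by have := c.pos; omega
    set N : ℕ := (c:ℕ) + wt w' with hNdef
    set M : ℕ+ := ⟨N, hpos⟩ with hMdef
    have hMval : (M:ℕ) = N := rfl
    have hMN : N ≤ (M:ℕ) := by omega
    have hw' : wt w' ≤ N := by have := c.pos; omega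
    have hcM : (c:ℕ) ≤ (M:ℕ) := by omega
    have hcI : c ∈ Finset.Icc (1:ℕ+) M := mem_Icc_of_le hcM
    have cov : ∀ p : Comp × Comp, stuf p.1 p.2 (c :: w') ≠ 0 →
        p ∈ insert (([]:Comp), c :: w')
          (insert ((c :: w' : Comp), ([]:Comp))
            ((((Finset.Icc (1:ℕ+) M ×ˢ compFinset N) ×ˢ
               (Finset.Icc (1:ℕ+) M ×ˢ compFinset N))).image
              (fun q => (q.1.1 :: q.1.2, q.2.1 :: q.2.2)))) := by
      rintro ⟨p1, p2⟩ hp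
      dsimp only at hp
      match p1, p2, hp with
      | [], p2, hp =>
        have h : c :: w' = p2 := by
          by_contra hne
          rw [stuf_nil_left, if_neg hne] at hp
          exact hp rfl
        subst h
        exact Finset.mem_insert_self _ _
      | s :: u, [], hp =>
        have h : c :: w' = s :: u := by
          by_contra hne
          rw [stuf_nil_right, if_neg hne] at hp
          exact hp rfl
        rw [← h]
        exact Finset.mem_insert_of_mem (Finset.mem_insert_self _ _)
      | s :: u, t :: v, hp =>
        have h := stuf_wt _ _ _ hp
        simp only [wt_cons] at h
        have hs1 : 0 < (s:ℕ) := s.pos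
        have ht1 : 0 < (t:ℕ) := t.pos
        refine Finset.mem_insert_of_mem (Finset.mem_insert_of_mem
          (Finset.mem_image.mpr ⟨((s,u),(t,v)), ?_, rfl⟩))
        refine Finset.mem_product.mpr ⟨Finset.mem_product.mpr ⟨?_, ?_⟩,
          Finset.mem_product.mpr ⟨?_, ?_⟩⟩
        · exact mem_Icc_of_le (show (s:ℕ) ≤ (M:ℕ) by omega)
        · exact mem_compFinset (show wt u ≤ N by omega)
        · exact mem_Icc_of_le (show (t:ℕ) ≤ (M:ℕ) by omega)
        · exact mem_compFinset (show wt v ≤ N by omega)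
    rw [stufA_eq_sum (star α) (star β) (c :: w') cov]
    rw [Finset.sum_insert (by simp), Finset.sum_insert (by simp)]
    rw [Finset.sum_image (fun a _ b _ hab => by
      obtain ⟨⟨a1, a2⟩, ⟨a3, a4⟩⟩ := a
      obtain ⟨⟨b1, b2⟩, ⟨b3, b4⟩⟩ := b
      simp only [Prod.mk.injEq, List.cons.injEq] at hab
      obtain ⟨⟨h1, h2⟩, h3, h4⟩ := hab
      subst h1; subst h2; subst h3; subst h4; rfl)]
    dsimp only
    -- decompose the cons-cons sum into three pieces
    have hQ : (∑ q ∈ (Finset.Icc (1:ℕ+) M ×ˢ compFinset N) ×ˢ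
                (Finset.Icc (1:ℕ+) M ×ˢ compFinset N),
          star α (q.1.1 :: q.1.2) * star β (q.2.1 :: q.2.2) *
            ((stuf (q.1.1 :: q.1.2) (q.2.1 :: q.2.2) (c :: w') : ℤ) : ℂ))
        = (∑ q ∈ (Finset.Icc (1:ℕ+) M ×ˢ compFinset N) ×ˢ
                (Finset.Icc (1:ℕ+) M ×ˢ compFinset N),
            star α (q.1.1 :: q.1.2) * star β (q.2.1 :: q.2.2) *
              (((if c = q.1.1 then stuf q.1.2 (q.2.1 :: q.2.2) w' else 0 : ℤ)) : ℂ))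
        + (∑ q ∈ (Finset.Icc (1:ℕ+) M ×ˢ compFinset N) ×ˢ
                (Finset.Icc (1:ℕ+) M ×ˢ compFinset N),
            star α (q.1.1 :: q.1.2) * star β (q.2.1 :: q.2.2) *
              (((if c = q.2.1 then stuf (q.1.1 :: q.1.2) q.2.2 w' else 0 : ℤ)) : ℂ))
        + (∑ q ∈ (Finset.Icc (1:ℕ+) M ×ˢ compFinset N) ×ˢ
                (Finset.Icc (1:ℕ+) M ×ˢ compFinset N),
            star α (q.1.1 :: q.1.2) * star β (q.2.1 :: q.2.2) *
              (((if c = q.1.1 + q.2.1 then stuf q.1.2 q.2.2 w' else 0 : ℤ)) : ℂ)) := by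
      rw [← Finset.sum_add_distrib, ← Finset.sum_add_distrib]
      refine Finset.sum_congr rfl fun q _ => ?_
      rw [stuf_cons_cons]
      push_cast
      ring
    rw [hQ]
    -- first piece
    have h1 : (∑ q ∈ (Finset.Icc (1:ℕ+) M ×ˢ compFinset N) ×ˢ
                (Finset.Icc (1:ℕ+) M ×ˢ compFinset N),
            star α (q.1.1 :: q.1.2) * star β (q.2.1 :: q.2.2) *
              (((if c = q.1.1 then stuf q.1.2 (q.2.1 :: q.2.2) w' else 0 : ℤ)) : ℂ))
        = α (c:ℕ) * (stufA (star α) (star β) w' - star α w') := by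
      have e1 : (∑ q ∈ (Finset.Icc (1:ℕ+) M ×ˢ compFinset N) ×ˢ
                (Finset.Icc (1:ℕ+) M ×ˢ compFinset N),
            star α (q.1.1 :: q.1.2) * star β (q.2.1 :: q.2.2) *
              (((if c = q.1.1 then stuf q.1.2 (q.2.1 :: q.2.2) w' else 0 : ℤ)) : ℂ))
          = ∑ s ∈ Finset.Icc (1:ℕ+) M, ∑ u ∈ compFinset N,
              ∑ t ∈ Finset.Icc (1:ℕ+) M, ∑ v ∈ compFinset N,
              star α (s :: u) * star β (t :: v) *
                (((if c = s then stuf u (t :: v) w' else 0 : ℤ)) : ℂ) := by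
        simp only [Finset.sum_product]
      rw [e1, Finset.sum_eq_single_of_mem c hcI (fun b _ hb => by
        have hnb : ¬ (c = b) := fun hh => hb hh.symm
        simp [hnb])]
      have e2 : (∑ u ∈ compFinset N, ∑ t ∈ Finset.Icc (1:ℕ+) M, ∑ v ∈ compFinset N,
              star α (c :: u) * star β (t :: v) *
                (((if c = c then stuf u (t :: v) w' else 0 : ℤ)) : ℂ))
          = α (c:ℕ) * ∑ u ∈ compFinset N, ∑ t ∈ Finset.Icc (1:ℕ+) M, ∑ v ∈ compFinset N,
              star α u * star β (t :: v) * ((stuf u (t :: v) w' : ℤ) : ℂ) := by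
        rw [Finset.mul_sum]
        refine Finset.sum_congr rfl fun u _ => ?_
        rw [Finset.mul_sum]
        refine Finset.sum_congr rfl fun t _ => ?_
        rw [Finset.mul_sum]
        refine Finset.sum_congr rfl fun v _ => ?_
        rw [if_pos rfl]
        simp only [star_cons]
        ring
      rw [e2]
      have e3 : (∑ u ∈ compFinset N, ∑ t ∈ Finset.Icc (1:ℕ+) M, ∑ v ∈ compFinset N,
              star α u * star β (t :: v) * ((stuf u (t :: v) w' : ℤ) : ℂ))
          = stufA (star α) (star β) w' - star α w' := by
        rw [rep1 α β w' hw' hMN]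
        ring
      rw [e3]
    -- second piece
    have h2 : (∑ q ∈ (Finset.Icc (1:ℕ+) M ×ˢ compFinset N) ×ˢ
                (Finset.Icc (1:ℕ+) M ×ˢ compFinset N),
            star α (q.1.1 :: q.1.2) * star β (q.2.1 :: q.2.2) *
              (((if c = q.2.1 then stuf (q.1.1 :: q.1.2) q.2.2 w' else 0 : ℤ)) : ℂ))
        = β (c:ℕ) * (stufA (star α) (star β) w' - star β w') := by
      have e1 : (∑ q ∈ (Finset.Icc (1:ℕ+) M ×ˢ compFinset N) ×ˢ
                (Finset.Icc (1:ℕ+) M ×ˢ compFinset N),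
            star α (q.1.1 :: q.1.2) * star β (q.2.1 :: q.2.2) *
              (((if c = q.2.1 then stuf (q.1.1 :: q.1.2) q.2.2 w' else 0 : ℤ)) : ℂ))
          = ∑ s ∈ Finset.Icc (1:ℕ+) M, ∑ u ∈ compFinset N,
              ∑ t ∈ Finset.Icc (1:ℕ+) M, ∑ v ∈ compFinset N,
              star α (s :: u) * star β (t :: v) *
                (((if c = t then stuf (s :: u) v w' else 0 : ℤ)) : ℂ) := by
        simp only [Finset.sum_product]
      have inner2 : ∀ (s : ℕ+) (u : Comp),
          (∑ t ∈ Finset.Icc (1:ℕ+) M, ∑ v ∈ compFinset N,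
            star α (s :: u) * star β (t :: v) *
              (((if c = t then stuf (s :: u) v w' else 0 : ℤ)) : ℂ))
          = β (c:ℕ) * ∑ v ∈ compFinset N,
              star α (s :: u) * star β v * ((stuf (s :: u) v w' : ℤ) : ℂ) := by
        intro s u
        rw [Finset.sum_eq_single_of_mem c hcI (fun b _ hb => by
          have hnb : ¬ (c = b) := fun hh => hb hh.symm
          simp [hnb])]
        rw [Finset.mul_sum]
        refine Finset.sum_congr rfl fun v _ => ?_
        rw [if_pos rfl]
        simp only [star_cons]
        ring
      rw [e1, Finset.sum_congr rfl (fun s _ => Finset.sum_congr rfl (fun u _ => inner2 s u))]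
      have pull : (∑ s ∈ Finset.Icc (1:ℕ+) M, ∑ u ∈ compFinset N,
            β (c:ℕ) * ∑ v ∈ compFinset N,
              star α (s :: u) * star β v * ((stuf (s :: u) v w' : ℤ) : ℂ))
          = β (c:ℕ) * ∑ s ∈ Finset.Icc (1:ℕ+) M, ∑ u ∈ compFinset N, ∑ v ∈ compFinset N,
              star α (s :: u) * star β v * ((stuf (s :: u) v w' : ℤ) : ℂ) := by
        rw [Finset.mul_sum]
        refine Finset.sum_congr rfl fun s _ => ?_
        rw [Finset.mul_sum]
      rw [pull]
      have e3 : (∑ s ∈ Finset.Icc (1:ℕ+) M, ∑ u ∈ compFinset N, ∑ v ∈ compFinset N,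
              star α (s :: u) * star β v * ((stuf (s :: u) v w' : ℤ) : ℂ))
          = stufA (star α) (star β) w' - star β w' := by
        rw [rep2 α β w' hw' hMN]
        ring
      rw [e3]
    -- third piece
    have h3 : (∑ q ∈ (Finset.Icc (1:ℕ+) M ×ˢ compFinset N) ×ˢ
                (Finset.Icc (1:ℕ+) M ×ˢ compFinset N),
            star α (q.1.1 :: q.1.2) * star β (q.2.1 :: q.2.2) *
              (((if c = q.1.1 + q.2.1 then stuf q.1.2 q.2.2 w' else 0 : ℤ)) : ℂ))
        = (∑ i ∈ Finset.Ico 1 (c:ℕ), α i * β ((c:ℕ) - i)) * stufA (star α) (star β) w' := by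
      have e1 : (∑ q ∈ (Finset.Icc (1:ℕ+) M ×ˢ compFinset N) ×ˢ
                (Finset.Icc (1:ℕ+) M ×ˢ compFinset N),
            star α (q.1.1 :: q.1.2) * star β (q.2.1 :: q.2.2) *
              (((if c = q.1.1 + q.2.1 then stuf q.1.2 q.2.2 w' else 0 : ℤ)) : ℂ))
          = ∑ s ∈ Finset.Icc (1:ℕ+) M, ∑ u ∈ compFinset N,
              ∑ t ∈ Finset.Icc (1:ℕ+) M, ∑ v ∈ compFinset N,
              star α (s :: u) * star β (t :: v) *
                (((if c = s + t then stuf u v w' else 0 : ℤ)) : ℂ) := by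
        simp only [Finset.sum_product]
      have inner3 : ∀ (s t : ℕ+),
          (∑ u ∈ compFinset N, ∑ v ∈ compFinset N,
            star α (s :: u) * star β (t :: v) *
              (((if c = s + t then stuf u v w' else 0 : ℤ)) : ℂ))
          = (if c = s + t then α (s:ℕ) * β (t:ℕ) else 0) *
              ∑ u ∈ compFinset N, ∑ v ∈ compFinset N,
                star α u * star β v * ((stuf u v w' : ℤ) : ℂ) := by
        intro s t
        by_cases hst : c = s + t
        · simp only [if_pos hst]
          rw [Finset.mul_sum]
          refine Finset.sum_congr rfl fun u _ => ?_
          rw [Finset.mul_sum]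
          refine Finset.sum_congr rfl fun v _ => ?_
          simp only [star_cons]
          ring
        · simp [if_neg hst]
      have step : (∑ s ∈ Finset.Icc (1:ℕ+) M, ∑ u ∈ compFinset N,
              ∑ t ∈ Finset.Icc (1:ℕ+) M, ∑ v ∈ compFinset N,
              star α (s :: u) * star β (t :: v) *
                (((if c = s + t then stuf u v w' else 0 : ℤ)) : ℂ))
          = ∑ s ∈ Finset.Icc (1:ℕ+) M, ∑ t ∈ Finset.Icc (1:ℕ+) M,
              (if c = s + t then α (s:ℕ) * β (t:ℕ) else 0) *
                ∑ u ∈ compFinset N, ∑ v ∈ compFinset N,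
                  star α u * star β v * ((stuf u v w' : ℤ) : ℂ) := by
        refine Finset.sum_congr rfl fun s _ => ?_
        rw [Finset.sum_comm]
        exact Finset.sum_congr rfl fun t _ => inner3 s t
      rw [e1, step]
      have pull : (∑ s ∈ Finset.Icc (1:ℕ+) M, ∑ t ∈ Finset.Icc (1:ℕ+) M,
              (if c = s + t then α (s:ℕ) * β (t:ℕ) else 0) *
                ∑ u ∈ compFinset N, ∑ v ∈ compFinset N,
                  star α u * star β v * ((stuf u v w' : ℤ) : ℂ))
          = (∑ s ∈ Finset.Icc (1:ℕ+) M, ∑ t ∈ Finset.Icc (1:ℕ+) M,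
              if c = s + t then α (s:ℕ) * β (t:ℕ) else 0) *
                ∑ u ∈ compFinset N, ∑ v ∈ compFinset N,
                  star α u * star β v * ((stuf u v w' : ℤ) : ℂ) := by
        rw [Finset.sum_mul]
        refine Finset.sum_congr rfl fun s _ => ?_
        rw [Finset.sum_mul]
      rw [pull, conv_sum α β c M hcM, ← rep3 α β w' hw']
    rw [h1, h2, h3]
    simp only [stuf_nil_left, stuf_nil_right, star_nil, star_cons, eq_self_iff_true, if_true]
    rw [← ih]
    push_cast
    ring
end
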